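/- If σ is a real symmetric 2N×2N matrix such that σ + iΩ is positive semidefinite (as a Hermitian matrix over ℂ), then σ is positive definite. -/

import Mathlib

open Matrix ComplexOrder

/-- The standard symplectic form `⊕_N [[0,1],[-1,0]]` on a `2N`-dimensional space. -/
def stdOmega (N : ℕ) (R : Type) [Ring R] :
    Matrix (Fin N × Fin 2) (Fin N × Fin 2) R := fun i j =>
  if i.1 = j.1 then
    (if i.2 = 0 ∧ j.2 = 1 then 1 else if i.2 = 1 ∧ j.2 = 0 then -1 else 0)
  else 0

lemma stdOmega_antisymm (N : ℕ) : (stdOmega N ℝ)ᵀ = -(stdOmega N ℝ) := by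
  ext ⟨a, b⟩ ⟨c, d⟩
  by_cases hac : a = c
  · subst hac
    simp only [transpose_apply, Matrix.neg_apply, stdOmega, if_pos rfl]
    fin_cases b <;> fin_cases d <;> norm_num [stdOmega]
  · simp [transpose_apply, Matrix.neg_apply, stdOmega, hac, Ne.symm hac]

lemma stdOmega_sq (N : ℕ) : stdOmega N ℝ * stdOmega N ℝ = -1 := by
  ext ⟨a, b⟩ ⟨c, d⟩
  simp only [mul_apply, neg_apply, one_apply]
  rw [Fintype.sum_prod_type, Finset.sum_eq_single a]
  · by_cases hac : a = c
    · subst hac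
      fin_cases b <;> fin_cases d <;> simp [stdOmega, Fin.sum_univ_two, Prod.ext_iff]
    · fin_cases b <;> simp [stdOmega, hac, Fin.sum_univ_two, Prod.ext_iff]
  · intro e _ hne
    apply Finset.sum_eq_zero
    intro f _
    simp [stdOmega, Ne.symm hne]
  · intro hh
    exact absurd (Finset.mem_univ _) hh

lemma stdOmega_mulVec_eq_zero {N : ℕ} {x : Fin N × Fin 2 → ℝ}
    (hx : stdOmega N ℝ *ᵥ x = 0) : x = 0 := by
  have h2 : stdOmega N ℝ *ᵥ (stdOmega N ℝ *ᵥ x) = 0 := by rw [hx, mulVec_zero]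
  rw [mulVec_mulVec, stdOmega_sq, neg_mulVec, one_mulVec, neg_eq_zero] at h2
  exact h2

/-- If `σ` is a real symmetric `2N×2N` matrix with `σ + iΩ` positive semidefinite
(as a Hermitian matrix over `ℂ`), then `σ` is positive definite. -/
theorem stmt2 (N : ℕ) (σ : Matrix (Fin N × Fin 2) (Fin N × Fin 2) ℝ)
    (hσ : σ.IsSymm)
    (h : (σ.map (Complex.ofReal) + Complex.I • stdOmega N ℂ).PosSemidef) :
    σ.PosDef := by
  set M := σ.map (Complex.ofReal) + Complex.I • stdOmega N ℂ with hM
  have hστ : σ.IsHermitian := by rwa [Matrix.IsHermitian, conjTranspose_eq_transpose_of_trivial]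
  refine PosDef.of_dotProduct_mulVec_pos hστ fun x hx => ?_
  set xc : Fin N × Fin 2 → ℂ := fun i => (x i : ℂ) with hxc
  have hstar : star xc = xc := by
    funext i; simp [hxc]
  have hMij : ∀ i j, M i j = ((σ i j : ℝ) : ℂ) + Complex.I * (((stdOmega N ℝ) i j : ℝ) : ℂ) := by
    intro i j
    simp only [hM, Matrix.add_apply, Matrix.smul_apply, map_apply, smul_eq_mul, stdOmega]
    congr 1
    push_cast [apply_ite Complex.ofReal]
    rfl
  -- key evaluation of M *ᵥ xc
  have hMv : ∀ i, (M *ᵥ xc) i = ((σ *ᵥ x) i : ℂ) + Complex.I * ((stdOmega N ℝ *ᵥ x) i : ℂ) := by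
    intro i
    simp only [mulVec, dotProduct, hMij, hxc, add_mul]
    rw [Finset.sum_add_distrib]
    push_cast
    rw [Finset.mul_sum]
    congr 1
    exact Finset.sum_congr rfl fun j _ => by ring
  -- antisymmetry gives vanishing of the Ω quadratic form
  have hΩq : x ⬝ᵥ (stdOmega N ℝ *ᵥ x) = 0 := by
    have h1 : x ⬝ᵥ (stdOmega N ℝ *ᵥ x) = -(x ⬝ᵥ (stdOmega N ℝ *ᵥ x)) := by
      conv_lhs => rw [dotProduct_mulVec, ← mulVec_transpose, stdOmega_antisymm, neg_mulVec,
        neg_dotProduct, dotProduct_comm]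
    linarith
  -- quadratic form equality
  have hquad : star xc ⬝ᵥ M *ᵥ xc = ((x ⬝ᵥ σ *ᵥ x : ℝ) : ℂ) := by
    rw [hstar]
    have key : xc ⬝ᵥ M *ᵥ xc =
        ((x ⬝ᵥ σ *ᵥ x : ℝ) : ℂ) + Complex.I * ((x ⬝ᵥ (stdOmega N ℝ *ᵥ x) : ℝ) : ℂ) := by
      simp only [dotProduct, hMv]
      simp only [hxc, mul_add]
      rw [Finset.sum_add_distrib]
      push_cast
      rw [Finset.mul_sum]
      congr 1
      exact Finset.sum_congr rfl fun j _ => by ring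
    rw [key, hΩq]
    simp
  -- nonnegativity
  have hge : (0 : ℝ) ≤ x ⬝ᵥ σ *ᵥ x := by
    have := h.dotProduct_mulVec_nonneg xc
    rw [hquad] at this
    exact_mod_cast this
  rcases lt_or_eq_of_le hge with hlt | heq
  · simpa [star_trivial] using hlt
  · exfalso
    have h0 : star xc ⬝ᵥ M *ᵥ xc = 0 := by rw [hquad, ← heq]; simp
    have hker : M *ᵥ xc = 0 := (h.dotProduct_mulVec_zero_iff xc).mp h0
    have hΩx : stdOmega N ℝ *ᵥ x = 0 := by
      funext i
      have h3 := congrFun hker i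
      rw [hMv i] at h3
      have him := congrArg Complex.im h3
      simpa using him
    exact hx (stdOmega_mulVec_eq_zero hΩx)
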